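/- For a ternary derivation δ of a full Hilbert B-module E, δ is closable if and only if the induced derivation d_δ (with d_δ(⟨x,y⟩) = ⟨δ(x),y⟩ + ⟨x,δ(y)⟩) is closable. -/

import Mathlib

open scoped RightActions
open Filter Topology

/-- The Hilbert C⋆-module class as it stood in Mathlib of December 2024: a right `A`-module
(action of `Aᵐᵒᵖ`), inner product `A`-linear on the right: `⟪x, y <• a⟫ = ⟪x, y⟫ * a`. -/
class CStarModuleRight (A E : Type*) [NonUnitalSemiring A] [StarRing A]
    [Module ℂ A] [AddCommGroup E] [Module ℂ E] [PartialOrder A] [SMul Aᵐᵒᵖ E] [Norm A] [Norm E]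
    extends Inner A E where
  inner_add_right {x} {y} {z} : inner x (y + z) = inner x y + inner x z
  inner_self_nonneg {x} : 0 ≤ inner x x
  inner_self {x} : inner x x = 0 ↔ x = 0
  inner_op_smul_right {a : A} {x y : E} : inner x (y <• a) = inner x y * a
  inner_smul_right_complex {z : ℂ} {x} {y} : inner x (z • y) = z • inner x y
  star_inner x y : star (inner x y) = inner y x
  norm_eq_sqrt_norm_inner_self x : ‖x‖ = Real.sqrt ‖inner x x‖

section Aux

variable {B E : Type*}
    [NonUnitalCStarAlgebra B] [PartialOrder B] [StarOrderedRing B]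
    [NormedAddCommGroup E] [NormedSpace ℂ E] [SMul Bᵐᵒᵖ E] [CStarModuleRight B E]

private lemma cs_inner_zero_right {x : E} : (inner B x (0 : E) : B) = 0 := by
  have h := CStarModuleRight.inner_add_right (A := B) (x := x) (y := (0 : E)) (z := 0)
  rw [add_zero] at h
  exact add_left_cancel (h.symm.trans (add_zero _).symm)

private lemma cs_inner_sub_right {x y z : E} :
    (inner B x (y - z) : B) = inner B x y - inner B x z := by
  have h := CStarModuleRight.inner_add_right (A := B) (x := x) (y := y - z) (z := z)
  rw [sub_add_cancel] at h
  exact eq_sub_of_add_eq h.symm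

private lemma cs_inner_op_smul_left {a : B} {x y : E} :
    (inner B (x <• a) y : B) = star a * inner B x y := by
  rw [← CStarModuleRight.star_inner y, CStarModuleRight.inner_op_smul_right, star_mul,
    CStarModuleRight.star_inner]

private lemma cs_norm_sq_eq {x : E} : ‖x‖ ^ 2 = ‖(inner B x x : B)‖ := by
  rw [CStarModuleRight.norm_eq_sqrt_norm_inner_self (A := B) x, Real.sq_sqrt (norm_nonneg _)]

private noncomputable def cs_opMod : CStarModule Bᵐᵒᵖ E where
  inner x y := MulOpposite.op (inner B x y)
  inner_add_right := by
    intro x y z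
    show MulOpposite.op (inner B x (y + z)) = MulOpposite.op (inner B x y) + MulOpposite.op (inner B x z)
    rw [CStarModuleRight.inner_add_right, MulOpposite.op_add]
  inner_self_nonneg := by
    intro x
    show MulOpposite.op (0 : B) ≤ MulOpposite.op (inner B x x)
    exact MulOpposite.op_le_op.mpr CStarModuleRight.inner_self_nonneg
  inner_self := by
    intro x
    show MulOpposite.op (inner B x x) = 0 ↔ x = 0
    rw [MulOpposite.op_eq_zero_iff]
    exact CStarModuleRight.inner_self
  inner_op_smul_right := by
    intro a x y
    show MulOpposite.op (inner B x (y <• a.unop)) = a * MulOpposite.op (inner B x y)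
    rw [CStarModuleRight.inner_op_smul_right, MulOpposite.op_mul, MulOpposite.op_unop]
  inner_smul_right_complex := by
    intro z x y
    show MulOpposite.op (inner B x (z • y)) = z • MulOpposite.op (inner B x y)
    rw [CStarModuleRight.inner_smul_right_complex, MulOpposite.op_smul]
  star_inner := by
    intro x y
    show star (MulOpposite.op (inner B x y)) = MulOpposite.op (inner B y x)
    rw [← MulOpposite.op_star, CStarModuleRight.star_inner]
  norm_eq_sqrt_norm_inner_self := by
    intro x
    show ‖x‖ = √‖MulOpposite.op (inner B x x)‖
    rw [MulOpposite.norm_op]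
    exact CStarModuleRight.norm_eq_sqrt_norm_inner_self x

private lemma cs_norm_inner_le {x y : E} : ‖(inner B x y : B)‖ ≤ ‖x‖ * ‖y‖ := by
  letI := cs_opMod (B := B) (E := E)
  have := CStarModule.norm_inner_le (A := Bᵐᵒᵖ) E (x := x) (y := y)
  have h2 : (inner Bᵐᵒᵖ x y : Bᵐᵒᵖ) = MulOpposite.op (inner B x y) := rfl
  rw [h2, MulOpposite.norm_op] at this
  exact this

private lemma cs_continuous_inner : Continuous (fun p : E × E => (inner B p.1 p.2 : B)) := by
  letI := cs_opMod (B := B) (E := E)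
  have hc := CStarModule.continuous_inner (A := Bᵐᵒᵖ) (E := E)
  have h2 : (fun p : E × E => (inner Bᵐᵒᵖ p.1 p.2 : Bᵐᵒᵖ)) =
      fun p => MulOpposite.op (inner B p.1 p.2) := rfl
  rw [h2] at hc
  exact MulOpposite.continuous_unop.comp hc

private lemma cs_inner_zero_left {x : E} : (inner B (0 : E) x : B) = 0 := by
  rw [← CStarModuleRight.star_inner x, cs_inner_zero_right, star_zero]

private lemma aux_ext {u v : E} (h : ∀ z : E, (inner B z u : B) = inner B z v) : u = v := by
  have h0 : (inner B (u - v) (u - v) : B) = 0 := by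
    rw [cs_inner_sub_right, h (u - v), sub_self]
  exact sub_eq_zero.mp (CStarModuleRight.inner_self.mp h0)

private lemma op_smul_add' (x : E) (a b : B) : x <• (a + b) = x <• a + x <• b :=
  aux_ext (B := B) fun z => by
    simp only [CStarModuleRight.inner_op_smul_right, CStarModuleRight.inner_add_right,
      cs_inner_sub_right, CStarModuleRight.inner_smul_right_complex,
      cs_inner_zero_right, mul_add, mul_sub, mul_zero, add_mul,
      mul_smul_comm, smul_mul_assoc]

private lemma op_smul_smul' (x : E) (c : ℂ) (a : B) : x <• (c • a) = c • (x <• a) :=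
  aux_ext (B := B) fun z => by
    simp only [CStarModuleRight.inner_op_smul_right, CStarModuleRight.inner_add_right,
      cs_inner_sub_right, CStarModuleRight.inner_smul_right_complex,
      cs_inner_zero_right, mul_add, mul_sub, mul_zero, add_mul,
      mul_smul_comm, smul_mul_assoc]

private lemma op_smul_zero' (x : E) : x <• (0 : B) = 0 :=
  aux_ext (B := B) fun z => by
    simp only [CStarModuleRight.inner_op_smul_right, CStarModuleRight.inner_add_right,
      cs_inner_sub_right, CStarModuleRight.inner_smul_right_complex,
      cs_inner_zero_right, mul_add, mul_sub, mul_zero, add_mul,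
      mul_smul_comm, smul_mul_assoc]

private lemma op_smul_sub' (x : E) (a b : B) : x <• (a - b) = x <• a - x <• b :=
  aux_ext (B := B) fun z => by
    simp only [CStarModuleRight.inner_op_smul_right, CStarModuleRight.inner_add_right,
      cs_inner_sub_right, CStarModuleRight.inner_smul_right_complex,
      cs_inner_zero_right, mul_add, mul_sub, mul_zero, add_mul,
      mul_smul_comm, smul_mul_assoc]

private lemma add_op_smul' (x y : E) (a : B) : (x + y) <• a = x <• a + y <• a :=
  aux_ext (B := B) fun z => by
    simp only [CStarModuleRight.inner_op_smul_right, CStarModuleRight.inner_add_right,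
      cs_inner_sub_right, CStarModuleRight.inner_smul_right_complex,
      cs_inner_zero_right, mul_add, mul_sub, mul_zero, add_mul,
      mul_smul_comm, smul_mul_assoc]

private lemma smul_op_smul' (c : ℂ) (x : E) (a : B) : (c • x) <• a = c • (x <• a) :=
  aux_ext (B := B) fun z => by
    simp only [CStarModuleRight.inner_op_smul_right, CStarModuleRight.inner_add_right,
      cs_inner_sub_right, CStarModuleRight.inner_smul_right_complex,
      cs_inner_zero_right, mul_add, mul_sub, mul_zero, add_mul,
      mul_smul_comm, smul_mul_assoc]

private lemma norm_op_smul_le' (x : E) (a : B) : ‖x <• a‖ ≤ ‖x‖ * ‖a‖ := by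
  have h1 : (inner B (x <• a) (x <• a) : B) = star a * (inner B x x : B) * a := by
    rw [CStarModuleRight.inner_op_smul_right, cs_inner_op_smul_left, mul_assoc]
  have h2 : ‖x <• a‖ ^ 2 = ‖star a * (inner B x x : B) * a‖ := by
    rw [cs_norm_sq_eq (B := B), h1]
  have h3 : ‖star a * (inner B x x : B) * a‖ ≤ ‖a‖ * ‖x‖ ^ 2 * ‖a‖ := by
    calc ‖star a * (inner B x x : B) * a‖ ≤ ‖star a * (inner B x x : B)‖ * ‖a‖ := norm_mul_le _ _
      _ ≤ ‖star a‖ * ‖(inner B x x : B)‖ * ‖a‖ := by gcongr; exact norm_mul_le _ _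
      _ = ‖a‖ * ‖x‖ ^ 2 * ‖a‖ := by rw [norm_star, cs_norm_sq_eq (B := B)]
  have h4 : ‖x <• a‖ ^ 2 ≤ (‖x‖ * ‖a‖) ^ 2 := by nlinarith [h2, h3]
  exact le_of_pow_le_pow_left₀ two_ne_zero (by positivity) h4

private lemma tendsto_op_smul' {f : ℕ → B} {a : B} (x : E) (h : Tendsto f atTop (𝓝 a)) :
    Tendsto (fun n => x <• f n) atTop (𝓝 (x <• a)) := by
  rw [tendsto_iff_norm_sub_tendsto_zero]
  have hb : ∀ n, ‖x <• f n - x <• a‖ ≤ ‖x‖ * ‖f n - a‖ := fun n => by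
    rw [← op_smul_sub']; exact norm_op_smul_le' x _
  have hg : Tendsto (fun n => ‖x‖ * ‖f n - a‖) atTop (𝓝 0) := by
    have := (tendsto_iff_norm_sub_tendsto_zero.mp h).const_mul ‖x‖
    simpa using this
  exact squeeze_zero (fun n => norm_nonneg _) hb hg

private lemma tendsto_op_smul_zero' {f : ℕ → B} (x : E) (h : Tendsto f atTop (𝓝 0)) :
    Tendsto (fun n => x <• f n) atTop (𝓝 0) := by
  have := tendsto_op_smul' x h
  rwa [op_smul_zero'] at this

private lemma tendsto_inner_left' {f : ℕ → E} {u : E} (v : E) (h : Tendsto f atTop (𝓝 u)) :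
    Tendsto (fun n => (inner B (f n) v : B)) atTop (𝓝 (inner B u v)) := by
  have hp : Tendsto (fun n => (f n, v)) atTop (𝓝 (u, v)) :=
    h.prodMk_nhds tendsto_const_nhds
  exact ((cs_continuous_inner (B := B) (E := E)).tendsto (u, v)).comp hp

private lemma tendsto_inner_right' {f : ℕ → E} {u : E} (v : E) (h : Tendsto f atTop (𝓝 u)) :
    Tendsto (fun n => (inner B v (f n) : B)) atTop (𝓝 (inner B v u)) := by
  have hp : Tendsto (fun n => (v, f n)) atTop (𝓝 (v, u)) :=
    tendsto_const_nhds.prodMk_nhds h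
  exact ((cs_continuous_inner (B := B) (E := E)).tendsto (v, u)).comp hp

end Aux

/-- A ternary derivation `δ` of a full Hilbert module is closable if and only if the
induced derivation `d_δ` is closable. -/
theorem stmt14 {B E : Type*}
    [NonUnitalCStarAlgebra B] [PartialOrder B] [StarOrderedRing B]
    [NormedAddCommGroup E] [NormedSpace ℂ E] [SMul Bᵐᵒᵖ E] [CStarModuleRight B E]
    [CompleteSpace E]
    (hfull : (Submodule.span ℂ {b : B | ∃ x y : E, (inner B x y : B) = b}).topologicalClosure = ⊤)
    (D : Submodule ℂ E) (hdense : Dense (D : Set E)) (δ : D →ₗ[ℂ] E)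
    (hinv : ∀ x y z : D, (x : E) <• (inner B (y : E) (z : E) : B) ∈ D)
    (htern : ∀ x y z : D,
      δ ⟨(x : E) <• (inner B (y : E) (z : E) : B), hinv x y z⟩ =
        δ x <• (inner B (y : E) (z : E) : B) + (x : E) <• (inner B (δ y) (z : E) : B)
          + (x : E) <• (inner B (y : E) (δ z) : B))
    (d : (Submodule.span ℂ {b : B | ∃ x y : D, (inner B (x : E) (y : E) : B) = b}) →ₗ[ℂ] B)
    (hd : ∀ x y : D, d ⟨(inner B (x : E) (y : E) : B), Submodule.subset_span ⟨x, y, rfl⟩⟩ =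
      (inner B (δ x) (y : E) : B) + (inner B (x : E) (δ y) : B)) :
    (∀ (x : ℕ → D) (e : E),
      Tendsto (fun n => (x n : E)) atTop (𝓝 0) →
      Tendsto (fun n => δ (x n)) atTop (𝓝 e) → e = 0) ↔
    (∀ (b : ℕ → Submodule.span ℂ {b : B | ∃ x y : D, (inner B (x : E) (y : E) : B) = b}) (c : B),
      Tendsto (fun n => (b n : B)) atTop (𝓝 0) →
      Tendsto (fun n => d (b n)) atTop (𝓝 c) → c = 0) := by
  -- D is invariant under the right action of S
  have memD : ∀ (b : B), b ∈ (Submodule.span ℂ {b : B | ∃ x y : D, (inner B (x : E) (y : E) : B) = b}) → ∀ x : D, (x : E) <• b ∈ D := by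
    intro b hb
    induction hb using Submodule.span_induction with
    | mem b hb =>
      obtain ⟨y, z, rfl⟩ := hb
      exact fun x => hinv x y z
    | zero => intro x; rw [op_smul_zero']; exact D.zero_mem
    | add a b _ _ ha hb => intro x; rw [op_smul_add']; exact D.add_mem (ha x) (hb x)
    | smul c a _ ha => intro x; rw [op_smul_smul']; exact D.smul_mem c (ha x)
  -- the generalized Leibniz rule
  have leib : ∀ (b : B) (hb : b ∈ (Submodule.span ℂ {b : B | ∃ x y : D, (inner B (x : E) (y : E) : B) = b})) (x : D),
      δ ⟨(x : E) <• b, memD b hb x⟩ = δ x <• b + (x : E) <• d ⟨b, hb⟩ := by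
    intro b hb
    induction hb using Submodule.span_induction with
    | mem b hb =>
      obtain ⟨y, z, rfl⟩ := hb
      intro x
      show δ ⟨(x : E) <• (inner B (y : E) (z : E) : B), hinv x y z⟩ =
        δ x <• (inner B (y : E) (z : E) : B) +
          (x : E) <• d ⟨(inner B (y : E) (z : E) : B), Submodule.subset_span ⟨y, z, rfl⟩⟩
      rw [htern x y z, hd y z, op_smul_add', add_assoc]
    | zero =>
      intro x
      have h1 : (⟨(x : E) <• (0 : B), memD 0 (Submodule.span ℂ {b : B | ∃ x y : D, (inner B (x : E) (y : E) : B) = b}).zero_mem x⟩ : D) = 0 :=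
        Subtype.ext (op_smul_zero' (x : E))
      have h2 : (⟨(0 : B), (Submodule.span ℂ {b : B | ∃ x y : D, (inner B (x : E) (y : E) : B) = b}).zero_mem⟩ : (Submodule.span ℂ {b : B | ∃ x y : D, (inner B (x : E) (y : E) : B) = b})) = 0 := rfl
      rw [h1, map_zero, h2, map_zero, op_smul_zero', op_smul_zero', add_zero]
    | add a b ha hb iha ihb =>
      intro x
      have h1 : (⟨(x : E) <• (a + b), memD (a + b) ((Submodule.span ℂ {b : B | ∃ x y : D, (inner B (x : E) (y : E) : B) = b}).add_mem ha hb) x⟩ : D) =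
          ⟨(x : E) <• a, memD a ha x⟩ + ⟨(x : E) <• b, memD b hb x⟩ :=
        Subtype.ext (op_smul_add' (x : E) a b)
      have h2 : (⟨a + b, (Submodule.span ℂ {b : B | ∃ x y : D, (inner B (x : E) (y : E) : B) = b}).add_mem ha hb⟩ : (Submodule.span ℂ {b : B | ∃ x y : D, (inner B (x : E) (y : E) : B) = b})) = ⟨a, ha⟩ + ⟨b, hb⟩ := rfl
      rw [h1, map_add, iha x, ihb x, h2, map_add, op_smul_add', op_smul_add']
      abel
    | smul c a ha iha =>
      intro x
      have h1 : (⟨(x : E) <• (c • a), memD (c • a) ((Submodule.span ℂ {b : B | ∃ x y : D, (inner B (x : E) (y : E) : B) = b}).smul_mem c ha) x⟩ : D) =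
          c • ⟨(x : E) <• a, memD a ha x⟩ :=
        Subtype.ext (op_smul_smul' (x : E) c a)
      have h2 : (⟨c • a, (Submodule.span ℂ {b : B | ∃ x y : D, (inner B (x : E) (y : E) : B) = b}).smul_mem c ha⟩ : (Submodule.span ℂ {b : B | ∃ x y : D, (inner B (x : E) (y : E) : B) = b})) = c • ⟨a, ha⟩ := rfl
      rw [h1, map_smul, iha x, h2, map_smul, op_smul_smul', op_smul_smul', smul_add]
  constructor
  · -- δ closable → d closable
    intro hδ b c hb0 hbc
    have key : ∀ x : D, (x : E) <• c = 0 := by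
      intro x
      refine hδ (fun n => ⟨(x : E) <• (b n : B), memD _ (b n).2 x⟩) ((x : E) <• c) ?_ ?_
      · exact squeeze_zero_norm (fun n => norm_op_smul_le' (x : E) (b n : B))
          (by simpa using (hb0.norm.const_mul ‖(x : E)‖))
      · have heq : ∀ n, δ ⟨(x : E) <• (b n : B), memD _ (b n).2 x⟩ =
            δ x <• (b n : B) + (x : E) <• d (b n) := by
          intro n
          have := leib (b n : B) (b n).2 x
          simpa using this
        simp_rw [heq]
        have h1 : Tendsto (fun n => δ x <• (b n : B)) atTop (𝓝 0) :=
          tendsto_op_smul_zero' (δ x) hb0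
        have h2 : Tendsto (fun n => (x : E) <• d (b n)) atTop (𝓝 ((x : E) <• c)) :=
          tendsto_op_smul' (x : E) hbc
        simpa using h1.add h2
    -- extend to all of E by continuity and density
    have hall : ∀ e : E, e <• c = 0 := by
      let L : E →ₗ[ℂ] E :=
        { toFun := fun e => e <• c
          map_add' := fun u v => add_op_smul' u v c
          map_smul' := fun z u => smul_op_smul' z u c }
      let Lc : E →L[ℂ] E := L.mkContinuous ‖c‖ (fun e => by
        rw [mul_comm]; exact norm_op_smul_le' e c)
      have hzero : (Lc : E → E) = fun _ => 0 :=
        Continuous.ext_on hdense Lc.continuous continuous_const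
          (fun z hz => key ⟨z, hz⟩)
      intro e
      exact congrFun hzero e
    -- conclude c = 0 using fullness
    have hker : ∀ b' : B, b' * c = 0 := by
      let R : B →L[ℂ] B := (ContinuousLinearMap.mul ℂ B).flip c
      have hgen : {b : B | ∃ x y : E, (inner B x y : B) = b} ⊆ ((LinearMap.ker (R : B →ₗ[ℂ] B) : Submodule ℂ B) : Set B) := by
        rintro _ ⟨u, v, rfl⟩
        have : (inner B u v : B) * c = (inner B u (v <• c) : B) :=
          (CStarModuleRight.inner_op_smul_right).symm
        simp only [SetLike.mem_coe, LinearMap.mem_ker]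
        show (inner B u v : B) * c = 0
        rw [this, hall v, cs_inner_zero_right]
      have hspan : Submodule.span ℂ {b : B | ∃ x y : E, (inner B x y : B) = b} ≤
          LinearMap.ker (R : B →ₗ[ℂ] B) := Submodule.span_le.mpr hgen
      have htop : (Submodule.span ℂ {b : B | ∃ x y : E, (inner B x y : B) = b}).topologicalClosure
          ≤ LinearMap.ker (R : B →ₗ[ℂ] B) :=
        Submodule.topologicalClosure_minimal _ hspan (ContinuousLinearMap.isClosed_ker R)
      rw [hfull] at htop
      intro b'
      exact htop (Submodule.mem_top)
    have : star c * c = 0 := hker (star c)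
    exact (CStarRing.star_mul_self_eq_zero_iff c).mp this
  · -- d closable → δ closable
    intro hdc x e hx0 hxe
    have key : ∀ y : D, (inner B e (y : E) : B) = 0 := by
      intro y
      refine hdc (fun n => ⟨(inner B ((x n : E)) (y : E) : B),
        Submodule.subset_span ⟨x n, y, rfl⟩⟩) (inner B e (y : E)) ?_ ?_
      · refine squeeze_zero_norm (fun n => cs_norm_inner_le) ?_
        simpa using hx0.norm.mul_const ‖(y : E)‖
      · have heq : ∀ n, d ⟨(inner B ((x n : E)) (y : E) : B),
            Submodule.subset_span ⟨x n, y, rfl⟩⟩ =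
            (inner B (δ (x n)) (y : E) : B) + (inner B ((x n : E)) (δ y) : B) :=
          fun n => hd (x n) y
        simp_rw [heq]
        have h1 : Tendsto (fun n => (inner B (δ (x n)) (y : E) : B)) atTop
            (𝓝 (inner B e (y : E))) := tendsto_inner_left' (y : E) hxe
        have h2 : Tendsto (fun n => (inner B ((x n : E)) (δ y) : B)) atTop
            (𝓝 (inner B (0 : E) (δ y))) := tendsto_inner_left' (δ y) hx0
        have := h1.add h2
        simpa [cs_inner_zero_left] using this
    have h0 : ∀ z : E, (inner B e z : B) = 0 := by
      have hzero : (fun z : E => (inner B e z : B)) = fun _ => 0 := by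
        refine Continuous.ext_on hdense ?_ continuous_const (fun z hz => key ⟨z, hz⟩)
        exact cs_continuous_inner.comp (continuous_const.prodMk continuous_id)
      intro z
      exact congrFun hzero z
    exact CStarModuleRight.inner_self.mp (h0 e)
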